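/- Let M, B_f, B_m, A_m, λ_u, λ_f be positive real constants and let 0 < X_min ≤ X_max < 1/λ_f. Define F(x) = (M·λ_u·x)/(B_f·(1 − e^{−λ_u·x})) + (A_m·λ_u·(1 − λ_f·x))/(B_m·(1 − e^{−A_m·λ_u·(1−λ_f·x)})). Assume (i) λ_f·A_m·B_f > M·B_m, and (ii) A_m·(1 − λ_f·x) ≥ x for every x ∈ [X_min, X_max]. Then F is antitone (monotone nonincreasing) on [X_min, X_max]; in particular F(X_max) ≤ F(x) for all x ∈ [X_min, X_max], so the minimum of F over [X_min, X_max] is attained at x = X_max. -/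

import Mathlib

noncomputable def gfun (t : ℝ) : ℝ := t / (1 - Real.exp (-t))
noncomputable def gd1 (t : ℝ) : ℝ :=
  (1 - Real.exp (-t) - t * Real.exp (-t)) / (1 - Real.exp (-t)) ^ 2
noncomputable def gd2 (t : ℝ) : ℝ :=
  Real.exp (-t) * (t + t * Real.exp (-t) + 2 * Real.exp (-t) - 2) / (1 - Real.exp (-t)) ^ 3

lemma expneg_lt_one {t : ℝ} (ht : 0 < t) : Real.exp (-t) < 1 := by
  rw [Real.exp_lt_one_iff]; linarith

lemma one_sub_pos {t : ℝ} (ht : 0 < t) : 0 < 1 - Real.exp (-t) := by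
  linarith [expneg_lt_one ht]

lemma hasDerivAt_denom (t : ℝ) :
    HasDerivAt (fun s : ℝ => 1 - Real.exp (-s)) (Real.exp (-t)) t := by
  have h := ((Real.hasDerivAt_exp (-t)).comp t (hasDerivAt_neg t))
  have := (hasDerivAt_const t (1:ℝ)).sub h
  simp at this; exact this

lemma hasDerivAt_gfun {t : ℝ} (ht : 0 < t) : HasDerivAt gfun (gd1 t) t := by
  have hne : (1 - Real.exp (-t)) ≠ 0 := ne_of_gt (one_sub_pos ht)
  have h := (hasDerivAt_id t).div (hasDerivAt_denom t) hne
  refine h.congr_deriv ?_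
  unfold gd1
  field_simp
  simp only [id_eq]; ring

lemma deriv_gfun {t : ℝ} (ht : 0 < t) : deriv gfun t = gd1 t :=
  (hasDerivAt_gfun ht).deriv

lemma hasDerivAt_gd1 {t : ℝ} (ht : 0 < t) : HasDerivAt gd1 (gd2 t) t := by
  have hne : (1 - Real.exp (-t)) ≠ 0 := ne_of_gt (one_sub_pos ht)
  have hne2 : ((1 - Real.exp (-t)) ^ 2) ≠ 0 := pow_ne_zero _ hne
  have hnum : HasDerivAt (fun s : ℝ => 1 - Real.exp (-s) - s * Real.exp (-s))
      (t * Real.exp (-t)) t := by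
    have hexp : HasDerivAt (fun s : ℝ => Real.exp (-s)) (-Real.exp (-t)) t := by
      have h := ((Real.hasDerivAt_exp (-t)).comp t (hasDerivAt_neg t)); simp at h; exact h
    have h2 : HasDerivAt (fun s : ℝ => s * Real.exp (-s))
        (1 * Real.exp (-t) + t * (-Real.exp (-t))) t := (hasDerivAt_id t).mul hexp
    have := (hasDerivAt_denom t).sub h2
    refine this.congr_deriv ?_; ring
  have hden : HasDerivAt (fun s : ℝ => (1 - Real.exp (-s)) ^ 2)
      (2 * (1 - Real.exp (-t)) ^ 1 * Real.exp (-t)) t := by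
    refine ((hasDerivAt_denom t).pow 2).congr_deriv ?_; norm_num
  have h := hnum.div hden hne2
  refine h.congr_deriv ?_
  unfold gd2
  field_simp
  ring

-- key inequality
lemma aux1 : ∀ t : ℝ, 0 ≤ t → 0 ≤ Real.exp t * (t - 1) + 1 := by
  intro t ht
  have hd : ∀ s : ℝ, HasDerivAt (fun u : ℝ => Real.exp u * (u - 1)) (Real.exp s * s) s := by
    intro s
    have := (Real.hasDerivAt_exp s).mul ((hasDerivAt_id s).sub (hasDerivAt_const s 1))
    refine this.congr_deriv ?_; simp only [Pi.sub_apply, id_eq]; ring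
  have hmono : MonotoneOn (fun u : ℝ => Real.exp u * (u - 1)) (Set.Ici 0) := by
    apply monotoneOn_of_deriv_nonneg (convex_Ici 0)
    · exact Continuous.continuousOn (by continuity)
    · intro s hs; exact (hd s).differentiableAt.differentiableWithinAt
    · intro s hs
      rw [(hd s).deriv]
      have : 0 < s := by simpa using hs
      positivity
  have := hmono (Set.self_mem_Ici) (Set.mem_Ici.2 ht) ht
  simp at this
  linarith

lemma aux2 : ∀ t : ℝ, 0 ≤ t → 0 ≤ Real.exp t * (t - 2) + t + 2 := by
  intro t ht
  have hd : ∀ s : ℝ, HasDerivAt (fun u : ℝ => Real.exp u * (u - 2) + u + 2)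
      (Real.exp s * (s - 1) + 1) s := by
    intro s
    have h1 := (Real.hasDerivAt_exp s).mul ((hasDerivAt_id s).sub (hasDerivAt_const s 2))
    have := (h1.add (hasDerivAt_id s)).add_const (2:ℝ)
    refine this.congr_deriv ?_; simp only [Pi.sub_apply, id_eq]; ring
  have hmono : MonotoneOn (fun u : ℝ => Real.exp u * (u - 2) + u + 2) (Set.Ici 0) := by
    apply monotoneOn_of_deriv_nonneg (convex_Ici 0)
    · exact Continuous.continuousOn (by continuity)
    · intro s hs; exact (hd s).differentiableAt.differentiableWithinAt
    · intro s hs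
      rw [(hd s).deriv]
      exact aux1 s (le_of_lt (by simpa using hs))
  have := hmono (Set.self_mem_Ici) (Set.mem_Ici.2 ht) ht
  simp at this
  linarith

lemma keyineq {t : ℝ} (ht : 0 ≤ t) :
    0 ≤ t + t * Real.exp (-t) + 2 * Real.exp (-t) - 2 := by
  have h := aux2 t ht
  have hE : Real.exp (-t) * Real.exp t = 1 := by
    rw [← Real.exp_add]; simp
  have hEpos : 0 < Real.exp (-t) := Real.exp_pos _
  nlinarith [mul_nonneg hEpos.le h]

lemma gd1_nonneg {t : ℝ} (ht : 0 < t) : 0 ≤ gd1 t := by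
  unfold gd1
  apply div_nonneg _ (by positivity)
  have h := Real.add_one_le_exp t
  have hE : Real.exp (-t) * Real.exp t = 1 := by rw [← Real.exp_add]; simp
  have hEpos : 0 < Real.exp (-t) := Real.exp_pos _
  nlinarith

lemma gd2_nonneg {t : ℝ} (ht : 0 < t) : 0 ≤ gd2 t := by
  unfold gd2
  exact div_nonneg (mul_nonneg (Real.exp_pos _).le (keyineq ht.le))
    (le_of_lt (pow_pos (one_sub_pos ht) 3))

lemma gfun_diffOn : DifferentiableOn ℝ gfun (Set.Ioi 0) := fun t ht =>
  (hasDerivAt_gfun (Set.mem_Ioi.1 ht)).differentiableAt.differentiableWithinAt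

lemma gfun_convex : ConvexOn ℝ (Set.Ioi 0) gfun := by
  apply convexOn_of_deriv2_nonneg (convex_Ioi 0) gfun_diffOn.continuousOn
  · rw [interior_Ioi]; exact gfun_diffOn
  · rw [interior_Ioi]
    exact fun s hs => ((hasDerivAt_gd1 hs).congr_of_eventuallyEq
      ((isOpen_Ioi.eventually_mem hs).mono fun y hy =>
        deriv_gfun hy)).differentiableAt.differentiableWithinAt
  · rw [interior_Ioi]
    intro t ht
    have ht' : (0:ℝ) < t := ht
    have hder : deriv (deriv gfun) t = gd2 t := by
      have h : HasDerivAt (deriv gfun) (gd2 t) t :=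
        (hasDerivAt_gd1 ht').congr_of_eventuallyEq
          ((isOpen_Ioi.eventually_mem ht).mono fun y hy => deriv_gfun hy)
      exact h.deriv
    simp only [Function.iterate_succ, Function.iterate_zero, Function.comp_apply, Function.id_def]
    rw [hder]
    exact gd2_nonneg ht'

lemma gfun_mono : MonotoneOn gfun (Set.Ioi 0) := by
  apply monotoneOn_of_deriv_nonneg (convex_Ioi 0) gfun_diffOn.continuousOn
  · rw [interior_Ioi]; exact gfun_diffOn
  · rw [interior_Ioi]; intro t ht
    rw [deriv_gfun ht]; exact gd1_nonneg ht
lemma main_ineq {a a' b' b c e : ℝ} (ha : 0 < a) (haa' : a < a')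
    (ha'b' : a' ≤ b') (hb'b : b' < b) (hbb : b - b' = e * (a' - a))
    (hc : 0 ≤ c) (hce : c ≤ e) :
    c * (gfun a' - gfun a) ≤ gfun b - gfun b' := by
  have ha' : 0 < a' := lt_trans ha haa'
  have hb' : 0 < b' := lt_of_lt_of_le ha' ha'b'
  have hb : 0 < b := lt_trans hb' hb'b
  have hab : a < b := lt_trans haa' (lt_of_le_of_lt ha'b' hb'b)
  have haI : a ∈ Set.Ioi (0:ℝ) := ha
  have ha'I : a' ∈ Set.Ioi (0:ℝ) := ha'
  have hb'I : b' ∈ Set.Ioi (0:ℝ) := hb'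
  have hbI : b ∈ Set.Ioi (0:ℝ) := hb
  have hsec1 : (gfun a' - gfun a) / (a' - a) ≤ (gfun b - gfun a) / (b - a) :=
    gfun_convex.secant_mono haI ha'I hbI (ne_of_gt haa') (ne_of_gt hab)
      (le_trans ha'b' hb'b.le)
  have hsec2 : (gfun a - gfun b) / (a - b) ≤ (gfun b' - gfun b) / (b' - b) :=
    gfun_convex.secant_mono hbI haI hb'I (ne_of_lt hab) (ne_of_lt hb'b)
      (le_trans haa'.le ha'b')
  have hflip : ∀ p q r s : ℝ, (p - q) / (r - s) = (q - p) / (s - r) := by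
    intro p q r s
    rw [← neg_div_neg_eq]
    ring_nf
  have hsec2' : (gfun b - gfun a) / (b - a) ≤ (gfun b - gfun b') / (b - b') := by
    rw [hflip (gfun b) (gfun a) b a, hflip (gfun b) (gfun b') b b']
    exact hsec2
  have hq : (gfun a' - gfun a) / (a' - a) ≤ (gfun b - gfun b') / (b - b') :=
    le_trans hsec1 hsec2'
  have hda : 0 < a' - a := sub_pos.2 haa'
  have hdb : 0 < b - b' := sub_pos.2 hb'b
  have hcross : (gfun a' - gfun a) * (b - b') ≤ (gfun b - gfun b') * (a' - a) :=
    (div_le_div_iff₀ hda hdb).mp hq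
  have hDelta : 0 ≤ gfun a' - gfun a :=
    sub_nonneg.2 (gfun_mono haI ha'I haa'.le)
  rw [hbb] at hcross
  have hcross' : ((gfun a' - gfun a) * e) * (a' - a) ≤ (gfun b - gfun b') * (a' - a) := by
    nlinarith [hcross]
  have h10 : (gfun a' - gfun a) * e ≤ gfun b - gfun b' :=
    le_of_mul_le_mul_right hcross' hda
  have h11 : c * (gfun a' - gfun a) ≤ e * (gfun a' - gfun a) :=
    mul_le_mul_of_nonneg_right hce hDelta
  linarith

/-- Proposition 4: under `λ_f·A_m·B_f > M·B_m` and
`A_m·(1 − λ_f x) ≥ x` on the feasible interval, the objective `F` is antitone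
on `[X_min, X_max]`, so its minimum is attained at `X_max`. -/
theorem stmt_12 (M B_f B_m A_m lam_u lam_f Xmin Xmax : ℝ)
    (hM : 0 < M) (hBf : 0 < B_f) (hBm : 0 < B_m) (hAm : 0 < A_m)
    (hlu : 0 < lam_u) (hlf : 0 < lam_f)
    (hXmin : 0 < Xmin) (hXle : Xmin ≤ Xmax) (hXmax : Xmax < 1 / lam_f)
    (F : ℝ → ℝ)
    (hF : ∀ x, F x =
        (M * lam_u * x) / (B_f * (1 - Real.exp (-(lam_u * x)))) +
        (A_m * lam_u * (1 - lam_f * x)) /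
          (B_m * (1 - Real.exp (-(A_m * lam_u * (1 - lam_f * x))))))
    (h1 : lam_f * A_m * B_f > M * B_m)
    (h2 : ∀ x ∈ Set.Icc Xmin Xmax, A_m * (1 - lam_f * x) ≥ x) :
    AntitoneOn F (Set.Icc Xmin Xmax) ∧
      ∀ x ∈ Set.Icc Xmin Xmax, F Xmax ≤ F x := by
  have hrepr : ∀ z : ℝ, F z = (M / B_f) * gfun (lam_u * z) +
      (1 / B_m) * gfun (A_m * lam_u * (1 - lam_f * z)) := by
    intro z
    rw [hF z]
    unfold gfun
    rw [div_mul_div_comm, div_mul_div_comm, one_mul]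
    ring
  have hmain : AntitoneOn F (Set.Icc Xmin Xmax) := by
    intro x hx y hy hxy
    rcases eq_or_lt_of_le hxy with rfl | hlt
    · exact le_refl _
    obtain ⟨hx1, hx2⟩ := hx
    obtain ⟨hy1, hy2⟩ := hy
    have hxpos : 0 < x := lt_of_lt_of_le hXmin hx1
    have hypos : 0 < y := lt_of_lt_of_le hXmin hy1
    have ha : 0 < lam_u * x := by positivity
    have haa' : lam_u * x < lam_u * y := mul_lt_mul_of_pos_left hlt hlu
    have ha'b' : lam_u * y ≤ A_m * lam_u * (1 - lam_f * y) := by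
      have h2y := h2 y ⟨hy1, hy2⟩
      calc lam_u * y ≤ lam_u * (A_m * (1 - lam_f * y)) :=
            mul_le_mul_of_nonneg_left h2y hlu.le
        _ = A_m * lam_u * (1 - lam_f * y) := by ring
    have hb'b : A_m * lam_u * (1 - lam_f * y) < A_m * lam_u * (1 - lam_f * x) := by
      have h3 : 1 - lam_f * y < 1 - lam_f * x :=
        sub_lt_sub_left (mul_lt_mul_of_pos_left hlt hlf) 1
      exact mul_lt_mul_of_pos_left h3 (by positivity)
    have hbb : A_m * lam_u * (1 - lam_f * x) - A_m * lam_u * (1 - lam_f * y)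
        = (A_m * lam_f) * (lam_u * y - lam_u * x) := by ring
    have hc : 0 ≤ M * B_m / B_f := by positivity
    have hce : M * B_m / B_f ≤ A_m * lam_f := by
      rw [div_le_iff₀ hBf]
      linarith [h1.le]
    have key := main_ineq ha haa' ha'b' hb'b hbb hc hce
    have hQ : (0:ℝ) ≤ 1 / B_m := by positivity
    have h6 := mul_le_mul_of_nonneg_left key hQ
    have h7 : (1 / B_m) * ((M * B_m / B_f) * (gfun (lam_u * y) - gfun (lam_u * x)))
        = (M / B_f) * gfun (lam_u * y) - (M / B_f) * gfun (lam_u * x) := by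
      field_simp
    rw [hrepr x, hrepr y]
    rw [h7] at h6
    have h8 : (1 / B_m) * (gfun (A_m * lam_u * (1 - lam_f * x))
        - gfun (A_m * lam_u * (1 - lam_f * y)))
        = (1 / B_m) * gfun (A_m * lam_u * (1 - lam_f * x))
          - (1 / B_m) * gfun (A_m * lam_u * (1 - lam_f * y)) := by ring
    rw [h8] at h6
    linarith
  exact ⟨hmain, fun x hx => hmain hx ⟨hXle, le_refl _⟩ hx.2⟩
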